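/- Let n = 3, ν₁,ν₂,ν₃ > 0, K a strictly concave strictly monotone kernel function, J an upper semicontinuous 3-field function, and x, y regular node systems with x₁ < y₁ < y₂ < x₂ < x₃ < y₃. Then either m₁(y) < m₁(x) or m₃(y) < m₃(x), and either m₀(x) < m₀(y) or m₂(x) < m₂(y); in particular intertwining of maxima holds. -/

import Mathlib

open Set

noncomputable section

/-- A kernel function: `[-1,1] → ℝ ∪ {-∞}`, real-valued and concave on `(-1,0)` and on `(0,1)`,
extended continuously (in `EReal`) to the closed subintervals, so that the endpoint values
(in particular `K 0`) are the one-sided limits. -/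
def KernelFun (K : ℝ → EReal) : Prop :=
  (∀ t, K t ≠ ⊤) ∧
  (∀ t ∈ Ioo (-1:ℝ) 0 ∪ Ioo (0:ℝ) 1, K t ≠ ⊥) ∧
  ConcaveOn ℝ (Ioo (-1:ℝ) 0) (fun t => (K t).toReal) ∧
  ConcaveOn ℝ (Ioo (0:ℝ) 1) (fun t => (K t).toReal) ∧
  ContinuousOn K (Icc (-1:ℝ) 0) ∧
  ContinuousOn K (Icc (0:ℝ) 1)

/-- Monotonicity condition (M): nonincreasing on `(-1,0)`, nondecreasing on `(0,1)`. -/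
def KMonotone (K : ℝ → EReal) : Prop :=
  AntitoneOn K (Ioo (-1:ℝ) 0) ∧ MonotoneOn K (Ioo (0:ℝ) 1)

/-- Strict monotonicity (SM): strictly decreasing on `[-1,0)`, strictly increasing on `(0,1]`. -/
def KStrictMonotone (K : ℝ → EReal) : Prop :=
  StrictAntiOn K (Ico (-1:ℝ) 0) ∧ StrictMonoOn K (Ioc (0:ℝ) 1)

/-- Strict concavity on both `(-1,0)` and `(0,1)`. -/
def KStrictConcave (K : ℝ → EReal) : Prop :=
  StrictConcaveOn ℝ (Ioo (-1:ℝ) 0) (fun t => (K t).toReal) ∧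
  StrictConcaveOn ℝ (Ioo (0:ℝ) 1) (fun t => (K t).toReal)

/-- An `n`-field function: bounded above on `[0,1]`, never `+∞`, and finite at more than `n`
points of `[0,1]`, counting the endpoints `0`, `1` with weight `1/2` only. -/
def NFieldFun (n : ℕ) (J : ℝ → EReal) : Prop :=
  (∀ t, J t ≠ ⊤) ∧
  (∃ M : ℝ, ∀ t ∈ Icc (0:ℝ) 1, J t ≤ (M : EReal)) ∧
  ((∃ S : Finset ℝ, ↑S ⊆ {t ∈ Ioo (0:ℝ) 1 | J t ≠ ⊥} ∧ n + 1 ≤ S.card) ∨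
   ((∃ S : Finset ℝ, ↑S ⊆ {t ∈ Ioo (0:ℝ) 1 | J t ≠ ⊥} ∧ n ≤ S.card) ∧
     (J 0 ≠ ⊥ ∨ J 1 ≠ ⊥)))

/-- The closed simplex: `0 ≤ x₁ ≤ ⋯ ≤ xₙ ≤ 1`. -/
def closedSimplex (n : ℕ) (x : Fin n → ℝ) : Prop :=
  (∀ i, x i ∈ Icc (0:ℝ) 1) ∧ Monotone x

/-- The open simplex: `0 < x₁ < ⋯ < xₙ < 1`. -/
def openSimplex (n : ℕ) (x : Fin n → ℝ) : Prop :=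
  (∀ i, x i ∈ Ioo (0:ℝ) 1) ∧ StrictMono x

/-- Extended node system: `x₀ = 0`, `x₁,…,xₙ`, `x_{n+1} = 1`. -/
def extNodes (n : ℕ) (x : Fin n → ℝ) : Fin (n + 2) → ℝ :=
  Fin.cons 0 (Fin.snoc x 1)

/-- The (weighted) sum of translates function `F(x,t) = J(t) + ∑ νⱼ K(t - xⱼ)`. -/
def sumTrans (n : ℕ) (ν : Fin n → ℝ) (K J : ℝ → EReal) (x : Fin n → ℝ) (t : ℝ) : EReal :=
  J t + ∑ i, (ν i : EReal) * K (t - x i)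

/-- The `j`-th interval maximum `mⱼ(x) = sup_{[xⱼ, xⱼ₊₁]} F(x,·)`. -/
def intMax (n : ℕ) (ν : Fin n → ℝ) (K J : ℝ → EReal) (x : Fin n → ℝ) (j : Fin (n + 1)) :
    EReal :=
  sSup (sumTrans n ν K J x '' Icc (extNodes n x j.castSucc) (extNodes n x j.succ))

/-- A node system is regular (nonsingular) if all interval maxima are finite. -/
def regularNodes (n : ℕ) (ν : Fin n → ℝ) (K J : ℝ → EReal) (x : Fin n → ℝ) : Prop :=
  ∀ j, intMax n ν K J x j ≠ ⊥



/-! ### Auxiliary lemmas -/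

open Filter

-- usc attains max on compact
lemma usc_exists_max {f : ℝ → EReal} {s : Set ℝ} (hs : IsCompact s) (hne : s.Nonempty)
    (hf : UpperSemicontinuousOn f s) : ∃ t ∈ s, sSup (f '' s) = f t := by
  by_contra hcon
  push_neg at hcon
  set m := sSup (f '' s) with hm
  have hlt : ∀ t ∈ s, f t < m := by
    intro t ht
    exact lt_of_le_of_ne (le_sSup (mem_image_of_mem f ht)) fun h => hcon t ht h.symm
  have hU : ∀ t ∈ s, ∃ c : EReal, c < m ∧ ∀ᶠ u in nhdsWithin t s, f u < c := by
    intro t ht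
    obtain ⟨c, hc1, hc2⟩ := exists_between (hlt t ht)
    exact ⟨c, hc2, hf t ht c hc1⟩
  choose c hc1 hc2 using hU
  have hU2 : ∀ t (ht : t ∈ s), ∃ U : Set ℝ, U ∈ nhds t ∧ ∀ u ∈ U ∩ s, f u < c t ht := by
    intro t ht
    obtain ⟨U, hUo, htU, hUs⟩ := mem_nhdsWithin.1 (hc2 t ht)
    exact ⟨U, hUo.mem_nhds htU, fun u hu => hUs hu⟩
  choose U hU1 hU2 using hU2
  obtain ⟨F, hF⟩ := hs.elim_nhds_subcover' U hU1
  have hFne : F.Nonempty := by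
    rcases hne with ⟨t, ht⟩
    rcases mem_iUnion₂.1 (hF ht) with ⟨i, hi, _⟩
    exact ⟨i, hi⟩
  obtain ⟨i, hi, hmax⟩ := F.exists_max_image (fun j => c j.1 j.2) hFne
  have hall : ∀ u ∈ s, f u ≤ c i.1 i.2 := by
    intro u hu
    rcases mem_iUnion₂.1 (hF hu) with ⟨j, hj, hju⟩
    exact le_trans (hU2 j.1 j.2 u ⟨hju, hu⟩).le (hmax j hj)
  exact absurd (sSup_le (by rintro b ⟨u, hu, rfl⟩; exact hall u hu) : m ≤ c i.1 i.2)
    (not_le.2 (hc1 i.1 i.2))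

section KLemmas

variable {K J : ℝ → EReal}

lemma ereal_add_ne_bot_left {a b : EReal} (h : a + b ≠ ⊥) : a ≠ ⊥ := by
  intro ha; rw [ha, EReal.bot_add] at h; exact h rfl

lemma ereal_add_ne_bot_right {a b : EReal} (h : a + b ≠ ⊥) : b ≠ ⊥ := by
  intro hb; rw [hb, EReal.add_bot] at h; exact h rfl

lemma ereal_coe_mul_ne_bot {ν : ℝ} (hν : 0 < ν) {v : EReal} (h : (ν : EReal) * v ≠ ⊥) :
    v ≠ ⊥ := by
  intro hv; rw [hv, EReal.coe_mul_bot_of_pos hν] at h; exact h rfl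

lemma ereal_coe_mul_ne_top {ν : ℝ} (hν : 0 < ν) {v : EReal} (h : v ≠ ⊤) :
    (ν : EReal) * v ≠ ⊤ := by
  induction v with
  | bot => rw [EReal.coe_mul_bot_of_pos hν]; simp
  | coe r => rw [← EReal.coe_mul]; exact EReal.coe_ne_top _
  | top => exact absurd rfl h

lemma ereal_toReal_lt {a b : EReal} (h : a < b) (ha : a ≠ ⊥) (hb : b ≠ ⊤) :
    a.toReal < b.toReal := by
  have ha' : a ≠ ⊤ := ne_top_of_lt h
  have hb' : b ≠ ⊥ := fun hbb => ha (le_bot_iff.1 (hbb ▸ h.le))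
  rw [← EReal.coe_toReal ha' ha, ← EReal.coe_toReal hb hb'] at h
  exact EReal.coe_lt_coe_iff.1 h

lemma ereal_toReal_le {a b : EReal} (h : a ≤ b) (ha : a ≠ ⊥) (hb : b ≠ ⊤) :
    a.toReal ≤ b.toReal := EReal.toReal_le_toReal h ha hb

lemma Kne_bot_neg (hK : KernelFun K) (hSM : KStrictMonotone K) {s : ℝ} (h1 : -1 ≤ s)
    (h2 : s < 0) : K s ≠ ⊥ := by
  have hmid : K (s / 2) ≠ ⊥ := hK.2.1 _ (Or.inl ⟨by linarith, by linarith⟩)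
  have : K (s / 2) < K s := hSM.1 ⟨h1, h2⟩ ⟨by linarith, by linarith⟩ (by linarith)
  intro hb
  rw [hb] at this
  exact hmid (le_bot_iff.1 this.le)

lemma Kne_bot_pos (hK : KernelFun K) (hSM : KStrictMonotone K) {s : ℝ} (h1 : 0 < s)
    (h2 : s ≤ 1) : K s ≠ ⊥ := by
  have hmid : K (s / 2) ≠ ⊥ := hK.2.1 _ (Or.inr ⟨by linarith, by linarith⟩)
  have : K (s / 2) < K s := hSM.2 ⟨by linarith, by linarith⟩ ⟨h1, h2⟩ (by linarith)
  intro hb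
  rw [hb] at this
  exact hmid (le_bot_iff.1 this.le)

lemma K0_le_neg (hK : KernelFun K) (hSM : KStrictMonotone K) {s : ℝ} (h1 : -1 ≤ s)
    (h2 : s < 0) : K 0 ≤ K s := by
  have hc : ContinuousWithinAt K (Icc (-1:ℝ) 0) 0 :=
    hK.2.2.2.2.1 0 ⟨by norm_num, le_refl 0⟩
  have h3 : Ioo s 0 ⊆ Icc (-1:ℝ) 0 := fun u hu => ⟨le_trans h1 hu.1.le, hu.2.le⟩
  have ht : Tendsto K (nhdsWithin 0 (Ioo s 0)) (nhds (K 0)) :=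
    hc.tendsto.mono_left (nhdsWithin_mono 0 h3)
  have hev : ∀ᶠ u in nhdsWithin 0 (Ioo s 0), K u ≤ K s := by
    filter_upwards [self_mem_nhdsWithin] with u hu
    exact (hSM.1 ⟨h1, h2⟩ ⟨le_trans h1 hu.1.le, hu.2⟩ hu.1).le
  haveI := right_nhdsWithin_Ioo_neBot h2
  exact le_of_tendsto ht hev

lemma K0_le_pos (hK : KernelFun K) (hSM : KStrictMonotone K) {s : ℝ} (h1 : 0 < s)
    (h2 : s ≤ 1) : K 0 ≤ K s := by
  have hc : ContinuousWithinAt K (Icc (0:ℝ) 1) 0 :=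
    hK.2.2.2.2.2 0 ⟨le_refl 0, by norm_num⟩
  have h3 : Ioo 0 s ⊆ Icc (0:ℝ) 1 := fun u hu => ⟨hu.1.le, le_trans hu.2.le h2⟩
  have ht : Tendsto K (nhdsWithin 0 (Ioo 0 s)) (nhds (K 0)) :=
    hc.tendsto.mono_left (nhdsWithin_mono 0 h3)
  have hev : ∀ᶠ u in nhdsWithin 0 (Ioo 0 s), K u ≤ K s := by
    filter_upwards [self_mem_nhdsWithin] with u hu
    exact (hSM.2 ⟨hu.1, le_trans hu.2.le h2⟩ ⟨h1, h2⟩ hu.2).le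
  haveI := left_nhdsWithin_Ioo_neBot h1
  exact le_of_tendsto ht hev

lemma K0_lt_neg (hK : KernelFun K) (hSM : KStrictMonotone K) {s : ℝ} (h1 : -1 ≤ s)
    (h2 : s < 0) : K 0 < K s := by
  refine lt_of_le_of_lt (K0_le_neg hK hSM (by linarith : (-1:ℝ) ≤ s/2) (by linarith)) ?_
  exact hSM.1 ⟨h1, h2⟩ ⟨by linarith, by linarith⟩ (by linarith)

lemma K0_lt_pos (hK : KernelFun K) (hSM : KStrictMonotone K) {s : ℝ} (h1 : 0 < s)
    (h2 : s ≤ 1) : K 0 < K s := by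
  refine lt_of_le_of_lt (K0_le_pos hK hSM (by linarith : (0:ℝ) < s/2) (by linarith)) ?_
  exact hSM.2 ⟨by linarith, by linarith⟩ ⟨h1, h2⟩ (by linarith)

end KLemmas


section SlopeLemmas

variable {K : ℝ → EReal}

lemma concave_four {s : Set ℝ} {f : ℝ → ℝ} (hf : ConcaveOn ℝ s f) {α β γ δ : ℝ}
    (hα : α ∈ s) (hβ : β ∈ s) (hγ : γ ∈ s) (hδ : δ ∈ s)
    (h1 : α < β) (h2 : β ≤ γ) (h3 : γ < δ) :
    (f δ - f γ) * (β - α) ≤ (f β - f α) * (δ - γ) := by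
  have hd : (f δ - f γ) / (δ - γ) ≤ (f β - f α) / (β - α) := by
    rcases eq_or_lt_of_le h2 with h2' | h2'
    · subst h2'
      exact hf.slope_anti_adjacent hα hδ h1 h3
    · exact le_trans (hf.slope_anti_adjacent hβ hδ h2' h3)
        (hf.slope_anti_adjacent hα hγ h1 h2')
  exact (div_le_div_iff₀ (by linarith) (by linarith)).1 hd

lemma slopeL (hK : KernelFun K) (hSM : KStrictMonotone K) {α β γ δ : ℝ}
    (hm1 : -1 < α) (h1 : α < β) (h2 : β ≤ γ) (h3 : γ < δ) (h4 : δ ≤ 0) (hδb : K δ ≠ ⊥) :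
    ((K δ).toReal - (K γ).toReal) * (β - α) ≤ ((K β).toReal - (K α).toReal) * (δ - γ) := by
  have main : ∀ δ', γ < δ' → δ' < 0 →
      ((K δ').toReal - (K γ).toReal) * (β - α) ≤ ((K β).toReal - (K α).toReal) * (δ' - γ) := by
    intro δ' hg hl
    exact concave_four hK.2.2.1 (⟨hm1, by linarith⟩ : α ∈ Ioo (-1:ℝ) 0)
      ⟨by linarith, by linarith⟩ ⟨by linarith, by linarith⟩ ⟨by linarith, hl⟩ h1 h2 hg
  rcases lt_or_eq_of_le h4 with h4' | h4'
  · exact main δ h3 h4'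
  · subst h4'
    set A := (K β).toReal - (K α).toReal with hA
    have hγ0 : γ < 0 := h3
    have hev : ∀ᶠ u in nhdsWithin 0 (Ioo γ 0),
        ((K 0).toReal - (K γ).toReal) * (β - α) ≤ A * (u - γ) := by
      filter_upwards [self_mem_nhdsWithin] with u hu
      have hne : K u ≠ ⊥ := hK.2.1 _ (Or.inl ⟨by linarith [hu.1], hu.2⟩)
      have h0r : (K 0).toReal ≤ (K u).toReal :=
        ereal_toReal_le (K0_le_neg hK hSM (by linarith [hu.1]) hu.2) hδb (hK.1 _)
      have := main u hu.1 hu.2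
      nlinarith [this, mul_le_mul_of_nonneg_right h0r (by linarith : (0:ℝ) ≤ β - α)]
    have ht : Tendsto (fun u : ℝ => A * (u - γ)) (nhdsWithin 0 (Ioo γ 0))
        (nhds (A * (0 - γ))) := by
      apply Tendsto.mono_left _ nhdsWithin_le_nhds
      exact (continuous_const.mul (continuous_id.sub continuous_const)).tendsto 0
    haveI := right_nhdsWithin_Ioo_neBot hγ0
    exact ge_of_tendsto ht hev

lemma slopeR (hK : KernelFun K) (hSM : KStrictMonotone K) {α β γ δ : ℝ}
    (hm1 : 0 ≤ α) (h1 : α < β) (h2 : β ≤ γ) (h3 : γ < δ) (h4 : δ < 1) (hαb : K α ≠ ⊥) :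
    ((K δ).toReal - (K γ).toReal) * (β - α) ≤ ((K β).toReal - (K α).toReal) * (δ - γ) := by
  have main : ∀ α', 0 < α' → α' < β →
      ((K δ).toReal - (K γ).toReal) * (β - α') ≤ ((K β).toReal - (K α').toReal) * (δ - γ) := by
    intro α' hg hl
    exact concave_four hK.2.2.2.1 (⟨hg, by linarith⟩ : α' ∈ Ioo (0:ℝ) 1)
      ⟨by linarith, by linarith⟩ ⟨by linarith, by linarith⟩ ⟨by linarith, h4⟩ hl h2 h3
  rcases lt_or_eq_of_le hm1 with h0' | h0'
  · exact main α h0' h1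
  · rw [← h0'] at hαb ⊢
    set B := ((K δ).toReal - (K γ).toReal) with hB
    have hev : ∀ᶠ u in nhdsWithin 0 (Ioo 0 β),
        B * (β - u) ≤ ((K β).toReal - (K 0).toReal) * (δ - γ) := by
      filter_upwards [self_mem_nhdsWithin] with u hu
      have hne : K u ≠ ⊥ := hK.2.1 _ (Or.inr ⟨hu.1, by linarith [hu.2]⟩)
      have h0r : (K 0).toReal ≤ (K u).toReal :=
        ereal_toReal_le (K0_le_pos hK hSM hu.1 (by linarith [hu.2])) hαb (hK.1 _)
      have := main u hu.1 hu.2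
      nlinarith [this, mul_le_mul_of_nonneg_right h0r (by linarith : (0:ℝ) ≤ δ - γ)]
    have ht : Tendsto (fun u : ℝ => B * (β - u)) (nhdsWithin 0 (Ioo 0 β))
        (nhds (B * (β - 0))) := by
      apply Tendsto.mono_left _ nhdsWithin_le_nhds
      exact (continuous_const.mul (continuous_const.sub continuous_id)).tendsto 0
    haveI := left_nhdsWithin_Ioo_neBot (by linarith : (0:ℝ) < β)
    have := le_of_tendsto ht hev
    simpa using this

end SlopeLemmas


section SumTransLemmas

variable {K J : ℝ → EReal} {ν₁ ν₂ ν₃ : ℝ}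

lemma sumTrans_eq (K J : ℝ → EReal) (ν₁ ν₂ ν₃ a b c t : ℝ) :
    sumTrans 3 ![ν₁, ν₂, ν₃] K J ![a, b, c] t =
      J t + ((ν₁ : EReal) * K (t - a) + (ν₂ : EReal) * K (t - b) + (ν₃ : EReal) * K (t - c)) := by
  simp [sumTrans, Fin.sum_univ_three]

lemma ereal_cwa_usc {f : ℝ → EReal} {s : Set ℝ} {x : ℝ} (h : ContinuousWithinAt f s x) :
    UpperSemicontinuousWithinAt f s x := fun y hy => h (Iio_mem_nhds hy)

lemma ereal_continuous_const_mul {c : ℝ} (hc : 0 < c) :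
    Continuous (fun v : EReal => (c : EReal) * v) := by
  rw [continuous_iff_continuousAt]
  intro v
  have h : ContinuousAt (fun p : EReal × EReal => p.1 * p.2) ((c : EReal), v) :=
    EReal.continuousAt_mul (Or.inl (show (c:EReal) ≠ 0 by exact_mod_cast hc.ne'))
      (Or.inl (show (c:EReal) ≠ 0 by exact_mod_cast hc.ne')) (Or.inl (EReal.coe_ne_bot c))
      (Or.inl (EReal.coe_ne_top c))
  exact h.comp (Continuous.continuousAt (continuous_const.prodMk continuous_id))

lemma sumTrans_ne_top (hK : KernelFun K) (hJtop : ∀ t, J t ≠ ⊤)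
    (hν₁ : 0 < ν₁) (hν₂ : 0 < ν₂) (hν₃ : 0 < ν₃) (a b c t : ℝ) :
    sumTrans 3 ![ν₁, ν₂, ν₃] K J ![a, b, c] t ≠ ⊤ := by
  rw [sumTrans_eq]
  refine (EReal.add_lt_top (hJtop t) ?_).ne
  exact (EReal.add_lt_top ((EReal.add_lt_top (ereal_coe_mul_ne_top hν₁ (hK.1 _))
    (ereal_coe_mul_ne_top hν₂ (hK.1 _))).ne) (ereal_coe_mul_ne_top hν₃ (hK.1 _))).ne

lemma sumTrans_ne_bot_parts (hν₁ : 0 < ν₁) (hν₂ : 0 < ν₂) (hν₃ : 0 < ν₃) {a b c t : ℝ}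
    (h : sumTrans 3 ![ν₁, ν₂, ν₃] K J ![a, b, c] t ≠ ⊥) :
    J t ≠ ⊥ ∧ K (t - a) ≠ ⊥ ∧ K (t - b) ≠ ⊥ ∧ K (t - c) ≠ ⊥ := by
  rw [sumTrans_eq] at h
  have h1 := ereal_add_ne_bot_left h
  have h2 := ereal_add_ne_bot_right h
  have h3 := ereal_add_ne_bot_left h2
  exact ⟨h1, ereal_coe_mul_ne_bot hν₁ (ereal_add_ne_bot_left h3),
    ereal_coe_mul_ne_bot hν₂ (ereal_add_ne_bot_right h3),
    ereal_coe_mul_ne_bot hν₃ (ereal_add_ne_bot_right h2)⟩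

lemma extract_ineq (hK : KernelFun K) (hJtop : ∀ t, J t ≠ ⊤) {a b c a' b' c' t : ℝ}
    (hJb : J t ≠ ⊥) (h1 : K (t - a) ≠ ⊥) (h2 : K (t - b) ≠ ⊥) (h3 : K (t - c) ≠ ⊥)
    (h4 : K (t - a') ≠ ⊥) (h5 : K (t - b') ≠ ⊥) (h6 : K (t - c') ≠ ⊥)
    (hle : sumTrans 3 ![ν₁, ν₂, ν₃] K J ![a, b, c] t ≤
      sumTrans 3 ![ν₁, ν₂, ν₃] K J ![a', b', c'] t) :
    ν₁ * (K (t - a)).toReal + ν₂ * (K (t - b)).toReal + ν₃ * (K (t - c)).toReal ≤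
      ν₁ * (K (t - a')).toReal + ν₂ * (K (t - b')).toReal + ν₃ * (K (t - c')).toReal := by
  rw [sumTrans_eq, sumTrans_eq] at hle
  rw [← EReal.coe_toReal (hJtop t) hJb, ← EReal.coe_toReal (hK.1 _) h1,
    ← EReal.coe_toReal (hK.1 _) h2, ← EReal.coe_toReal (hK.1 _) h3,
    ← EReal.coe_toReal (hK.1 _) h4, ← EReal.coe_toReal (hK.1 _) h5,
    ← EReal.coe_toReal (hK.1 _) h6, ← EReal.coe_mul, ← EReal.coe_mul, ← EReal.coe_mul,
    ← EReal.coe_mul, ← EReal.coe_mul, ← EReal.coe_mul, ← EReal.coe_add, ← EReal.coe_add,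
    ← EReal.coe_add, ← EReal.coe_add, ← EReal.coe_add, ← EReal.coe_add,
    EReal.coe_le_coe_iff] at hle
  linarith

lemma exists_maximizer (hK : KernelFun K) (hJusc : UpperSemicontinuousOn J (Icc (0:ℝ) 1))
    (hJtop : ∀ t, J t ≠ ⊤) (hν₁ : 0 < ν₁) (hν₂ : 0 < ν₂) (hν₃ : 0 < ν₃) (a b c : ℝ)
    {p q : ℝ} (hpq : p ≤ q) (hsub : Icc p q ⊆ Icc (0:ℝ) 1)
    (hbr : ∀ z ∈ ({a, b, c} : Set ℝ), (∀ t ∈ Icc p q, t - z ∈ Icc (-1:ℝ) 0) ∨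
      (∀ t ∈ Icc p q, t - z ∈ Icc (0:ℝ) 1)) :
    ∃ t ∈ Icc p q, sSup (sumTrans 3 ![ν₁, ν₂, ν₃] K J ![a, b, c] '' Icc p q) =
      sumTrans 3 ![ν₁, ν₂, ν₃] K J ![a, b, c] t := by
  apply usc_exists_max isCompact_Icc (nonempty_Icc.2 hpq)
  have hg : ∀ z ∈ ({a, b, c} : Set ℝ), ∀ ν : ℝ, 0 < ν →
      ContinuousOn (fun t => (ν : EReal) * K (t - z)) (Icc p q) := by
    intro z hz ν hν
    have hsubcont : ContinuousOn (fun t : ℝ => K (t - z)) (Icc p q) := by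
      rcases hbr z hz with hbr' | hbr'
      · exact (hK.2.2.2.2.1.comp ((continuous_id.sub continuous_const).continuousOn)) hbr'
      · exact (hK.2.2.2.2.2.comp ((continuous_id.sub continuous_const).continuousOn)) hbr'
    exact (ereal_continuous_const_mul hν).comp_continuousOn hsubcont
  intro t ht
  have hJ' : UpperSemicontinuousWithinAt J (Icc p q) t := (hJusc.mono hsub) t ht
  have h0 : ContinuousWithinAt (fun u => (ν₁ : EReal) * K (u - a)) (Icc p q) t :=
    hg a (by simp) ν₁ hν₁ t ht
  have h1 : ContinuousWithinAt (fun u => (ν₂ : EReal) * K (u - b)) (Icc p q) t :=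
    hg b (by simp) ν₂ hν₂ t ht
  have h2 : ContinuousWithinAt (fun u => (ν₃ : EReal) * K (u - c)) (Icc p q) t :=
    hg c (by simp) ν₃ hν₃ t ht
  have hadd01 : ContinuousWithinAt
      (fun u => (ν₁ : EReal) * K (u - a) + (ν₂ : EReal) * K (u - b)) (Icc p q) t := by
    have hc : ContinuousAt (fun pr : EReal × EReal => pr.1 + pr.2)
        ((ν₁ : EReal) * K (t - a), (ν₂ : EReal) * K (t - b)) :=
      EReal.continuousAt_add (Or.inl (ereal_coe_mul_ne_top hν₁ (hK.1 _)))
        (Or.inr (ereal_coe_mul_ne_top hν₂ (hK.1 _)))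
    exact Filter.Tendsto.comp hc (h0.prodMk h1)
  have hadd012 : ContinuousWithinAt
      (fun u => (ν₁ : EReal) * K (u - a) + (ν₂ : EReal) * K (u - b) + (ν₃ : EReal) * K (u - c))
      (Icc p q) t := by
    have hc : ContinuousAt (fun pr : EReal × EReal => pr.1 + pr.2)
        ((ν₁ : EReal) * K (t - a) + (ν₂ : EReal) * K (t - b), (ν₃ : EReal) * K (t - c)) :=
      EReal.continuousAt_add
        (Or.inl ((EReal.add_lt_top (ereal_coe_mul_ne_top hν₁ (hK.1 _))
          (ereal_coe_mul_ne_top hν₂ (hK.1 _))).ne))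
        (Or.inr (ereal_coe_mul_ne_top hν₃ (hK.1 _)))
    exact Filter.Tendsto.comp hc (hadd01.prodMk h2)
  have hF : UpperSemicontinuousWithinAt
      (fun u => J u + ((ν₁ : EReal) * K (u - a) + (ν₂ : EReal) * K (u - b) +
        (ν₃ : EReal) * K (u - c))) (Icc p q) t := by
    refine hJ'.add' (ereal_cwa_usc hadd012) ?_
    exact EReal.continuousAt_add (Or.inl (hJtop t))
      (Or.inr ((EReal.add_lt_top ((EReal.add_lt_top (ereal_coe_mul_ne_top hν₁ (hK.1 _))
        (ereal_coe_mul_ne_top hν₂ (hK.1 _))).ne) (ereal_coe_mul_ne_top hν₃ (hK.1 _))).ne))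
  have : (fun u => sumTrans 3 ![ν₁, ν₂, ν₃] K J ![a, b, c] u) =
      fun u => J u + ((ν₁ : EReal) * K (u - a) + (ν₂ : EReal) * K (u - b) +
        (ν₃ : EReal) * K (u - c)) := by
    funext u; exact sumTrans_eq K J ν₁ ν₂ ν₃ a b c u
  rw [show sumTrans 3 ![ν₁, ν₂, ν₃] K J ![a, b, c] =
      fun u => J u + ((ν₁ : EReal) * K (u - a) + (ν₂ : EReal) * K (u - b) +
        (ν₃ : EReal) * K (u - c)) from this]
  exact hF

end SumTransLemmas


lemma coreA {nb nc P Q R S w2 w3 : ℝ} (hnb : 0 < nb) (hnc : 0 < nc)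
    (hQ0 : 0 ≤ Q) (hS0 : 0 ≤ S) (hw2 : 0 < w2) (hw3 : 0 < w3)
    (hi : nb * Q < nc * P) (hiii : nc * S < nb * R)
    (hii : P * w2 ≤ Q * w3) (hiv : R * w3 ≤ S * w2) : False := by
  have hP0 : 0 < P := by nlinarith [mul_nonneg hnb.le hQ0]
  have hR0 : 0 < R := by nlinarith [mul_nonneg hnc.le hS0]
  have hPR : P * R ≤ Q * S := by
    nlinarith [mul_le_mul_of_nonneg_right hii hR0.le, mul_le_mul_of_nonneg_left hiv hQ0]
  have hfinal : nb * Q * (nc * S) < nc * P * (nb * R) :=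
    mul_lt_mul'' hi hiii (mul_nonneg hnb.le hQ0) (mul_nonneg hnc.le hS0)
  nlinarith [mul_le_mul_of_nonneg_left hPR (mul_pos hnb hnc).le]

lemma coreB {na nb X Y Z W w1 w2 : ℝ} (hna : 0 < na) (hnb : 0 < nb)
    (hY0 : 0 ≤ Y) (hW0 : 0 < W) (hw1 : 0 < w1) (hw2 : 0 < w2)
    (hi : na * Y < nb * X) (hiii : nb * W ≤ na * Z)
    (hii : X * w1 ≤ Y * w2) (hiv : Z * w2 ≤ W * w1) : False := by
  have hX0 : 0 < X := by nlinarith [mul_nonneg hna.le hY0]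
  have hZ0 : 0 < Z := by nlinarith [mul_pos hnb hW0]
  have hXZ : X * Z ≤ Y * W := by
    nlinarith [mul_le_mul_of_nonneg_right hii hZ0.le, mul_le_mul_of_nonneg_left hiv hY0]
  have hfinal : na * Y * (nb * W) < nb * X * (na * Z) := by
    calc na * Y * (nb * W) < nb * X * (nb * W) :=
          mul_lt_mul_of_pos_right hi (mul_pos hnb hW0)
      _ ≤ nb * X * (na * Z) := mul_le_mul_of_nonneg_left hiii (mul_pos hnb hX0).le
  nlinarith [mul_le_mul_of_nonneg_left hXZ (mul_pos hna hnb).le]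

set_option maxHeartbeats 2000000 in
/-- The `n = 3` case with `x₁ < y₁ < y₂ < x₂ < x₃ < y₃` (Case 1): then `m₁(y) < m₁(x)` or
`m₃(y) < m₃(x)`, and `m₀(x) < m₀(y)` or `m₂(x) < m₂(y)`; intertwining of maxima holds. -/
theorem three_nodes_case1 (ν₁ ν₂ ν₃ : ℝ) (hν₁ : 0 < ν₁) (hν₂ : 0 < ν₂) (hν₃ : 0 < ν₃)
    (K J : ℝ → EReal) (hK : KernelFun K) (hSC : KStrictConcave K) (hSM : KStrictMonotone K)
    (hJ : NFieldFun 3 J) (hJusc : UpperSemicontinuousOn J (Icc (0:ℝ) 1))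
    (x₁ x₂ x₃ y₁ y₂ y₃ : ℝ) (h0 : 0 ≤ x₁) (h1 : x₁ < y₁) (h2 : y₁ < y₂) (h3 : y₂ < x₂)
    (h4 : x₂ < x₃) (h5 : x₃ < y₃) (h6 : y₃ ≤ 1)
    (hxr : regularNodes 3 ![ν₁, ν₂, ν₃] K J ![x₁, x₂, x₃])
    (hyr : regularNodes 3 ![ν₁, ν₂, ν₃] K J ![y₁, y₂, y₃]) :
    (intMax 3 ![ν₁, ν₂, ν₃] K J ![y₁, y₂, y₃] 1 < intMax 3 ![ν₁, ν₂, ν₃] K J ![x₁, x₂, x₃] 1 ∨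
      intMax 3 ![ν₁, ν₂, ν₃] K J ![y₁, y₂, y₃] 3 < intMax 3 ![ν₁, ν₂, ν₃] K J ![x₁, x₂, x₃] 3) ∧
    (intMax 3 ![ν₁, ν₂, ν₃] K J ![x₁, x₂, x₃] 0 < intMax 3 ![ν₁, ν₂, ν₃] K J ![y₁, y₂, y₃] 0 ∨
      intMax 3 ![ν₁, ν₂, ν₃] K J ![x₁, x₂, x₃] 2 < intMax 3 ![ν₁, ν₂, ν₃] K J ![y₁, y₂, y₃] 2) := by
  have hJtop := hJ.1
  have hKtop := hK.1
  constructor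
  · -- Claim A : m₁(y) < m₁(x) ∨ m₃(y) < m₃(x)
    by_contra hcon
    push_neg at hcon
    obtain ⟨hA1, hA3⟩ := hcon
    -- maximizer t₁ of F(y,·) on [y₁, y₂]
    obtain ⟨t₁, ht₁, hFt₁⟩ := exists_maximizer (K := K) (J := J) hK hJusc hJtop hν₁ hν₂ hν₃
      y₁ y₂ y₃ h2.le
      (fun t ht => ⟨by linarith [ht.1, ht.2], by linarith [ht.1, ht.2]⟩)
      (by
        intro z hz
        simp only [mem_insert_iff, mem_singleton_iff] at hz
        rcases hz with rfl | rfl | rfl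
        · exact Or.inr (fun t ht => ⟨by linarith [ht.1], by linarith [ht.2]⟩)
        · exact Or.inl (fun t ht => ⟨by linarith [ht.1], by linarith [ht.2]⟩)
        · exact Or.inl (fun t ht => ⟨by linarith [ht.1], by linarith [ht.2]⟩))
    have e1y : intMax 3 ![ν₁, ν₂, ν₃] K J ![y₁, y₂, y₃] 1 =
        sSup (sumTrans 3 ![ν₁, ν₂, ν₃] K J ![y₁, y₂, y₃] '' Icc y₁ y₂) := rfl
    have e1x : intMax 3 ![ν₁, ν₂, ν₃] K J ![x₁, x₂, x₃] 1 =
        sSup (sumTrans 3 ![ν₁, ν₂, ν₃] K J ![x₁, x₂, x₃] '' Icc x₁ x₂) := rfl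
    have hFy1ne : sumTrans 3 ![ν₁, ν₂, ν₃] K J ![y₁, y₂, y₃] t₁ ≠ ⊥ := by
      rw [← hFt₁, ← e1y]; exact hyr 1
    have hle1 : sumTrans 3 ![ν₁, ν₂, ν₃] K J ![x₁, x₂, x₃] t₁ ≤
        sumTrans 3 ![ν₁, ν₂, ν₃] K J ![y₁, y₂, y₃] t₁ := by
      calc sumTrans 3 ![ν₁, ν₂, ν₃] K J ![x₁, x₂, x₃] t₁
          ≤ intMax 3 ![ν₁, ν₂, ν₃] K J ![x₁, x₂, x₃] 1 := by
            rw [e1x]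
            exact le_sSup (mem_image_of_mem _ ⟨by linarith [ht₁.1], by linarith [ht₁.2]⟩)
        _ ≤ intMax 3 ![ν₁, ν₂, ν₃] K J ![y₁, y₂, y₃] 1 := hA1
        _ = sumTrans 3 ![ν₁, ν₂, ν₃] K J ![y₁, y₂, y₃] t₁ := by rw [e1y, hFt₁]
    obtain ⟨hJb1, hKy11, hKy12, hKy13⟩ := sumTrans_ne_bot_parts hν₁ hν₂ hν₃ hFy1ne
    have hKx11 : K (t₁ - x₁) ≠ ⊥ :=
      hK.2.1 _ (Or.inr ⟨by linarith [ht₁.1], by linarith [ht₁.2]⟩)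
    have hKx12 : K (t₁ - x₂) ≠ ⊥ :=
      hK.2.1 _ (Or.inl ⟨by linarith [ht₁.1], by linarith [ht₁.2]⟩)
    have hKx13 : K (t₁ - x₃) ≠ ⊥ :=
      hK.2.1 _ (Or.inl ⟨by linarith [ht₁.1], by linarith [ht₁.2]⟩)
    have hineq1 := extract_ineq hK hJtop hJb1 hKx11 hKx12 hKx13 hKy11 hKy12 hKy13 hle1
    -- strict inequality in the first term
    have hstrict1 : (K (t₁ - y₁)).toReal < (K (t₁ - x₁)).toReal := by
      have hKlt : K (t₁ - y₁) < K (t₁ - x₁) := by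
        rcases eq_or_lt_of_le ht₁.1 with hq | hq
        · have hz : t₁ - y₁ = 0 := by linarith
          rw [hz]
          exact K0_lt_pos hK hSM (by linarith) (by linarith [ht₁.2])
        · exact hSM.2 ⟨by linarith, by linarith [ht₁.2]⟩
            ⟨by linarith, by linarith [ht₁.2]⟩ (by linarith)
      exact ereal_toReal_lt hKlt hKy11 (hKtop _)
    -- Q ≥ 0
    have hQ : (K (t₁ - y₂)).toReal ≤ (K (t₁ - x₂)).toReal := by
      have hKle : K (t₁ - y₂) ≤ K (t₁ - x₂) := by
        rcases eq_or_lt_of_le ht₁.2 with hq | hq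
        · have hz : t₁ - y₂ = 0 := by linarith
          rw [hz]
          exact K0_le_neg hK hSM (by linarith [ht₁.1]) (by linarith)
        · exact (hSM.1 ⟨by linarith [ht₁.1], by linarith⟩
            ⟨by linarith [ht₁.1], by linarith⟩ (by linarith)).le
      exact ereal_toReal_le hKle hKy12 (hKtop _)
    set P : ℝ := (K (t₁ - y₃)).toReal - (K (t₁ - x₃)).toReal with hPdef
    set Q : ℝ := (K (t₁ - x₂)).toReal - (K (t₁ - y₂)).toReal with hQdef
    have hQ0 : 0 ≤ Q := by simp only [hQdef]; linarith only [hQ]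
    have hi : ν₂ * Q < ν₃ * P := by
      have h' := mul_lt_mul_of_pos_left hstrict1 hν₁
      simp only [hPdef, hQdef]
      linarith only [hineq1, h']
    -- slope inequality on the left branch
    have hslope1 := slopeL (α := t₁ - y₃) (β := t₁ - x₃) (γ := t₁ - x₂) (δ := t₁ - y₂)
      hK hSM (by linarith [ht₁.1]) (by linarith) (by linarith) (by linarith)
      (by linarith [ht₁.2]) hKy12
    have hii : P * (x₂ - y₂) ≤ Q * (y₃ - x₃) := by
      simp only [hPdef, hQdef]
      nlinarith [hslope1]
    -- maximizer t₃ of F(y,·) on [y₃, 1]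
    obtain ⟨t₃, ht₃, hFt₃⟩ := exists_maximizer (K := K) (J := J) hK hJusc hJtop hν₁ hν₂ hν₃
      y₁ y₂ y₃ h6
      (fun t ht => ⟨by linarith [ht.1], by linarith [ht.2]⟩)
      (by
        intro z hz
        simp only [mem_insert_iff, mem_singleton_iff] at hz
        rcases hz with rfl | rfl | rfl
        · exact Or.inr (fun t ht => ⟨by linarith [ht.1], by linarith [ht.2]⟩)
        · exact Or.inr (fun t ht => ⟨by linarith [ht.1], by linarith [ht.2]⟩)
        · exact Or.inr (fun t ht => ⟨by linarith [ht.1], by linarith [ht.2]⟩))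
    have e3y : intMax 3 ![ν₁, ν₂, ν₃] K J ![y₁, y₂, y₃] 3 =
        sSup (sumTrans 3 ![ν₁, ν₂, ν₃] K J ![y₁, y₂, y₃] '' Icc y₃ 1) := rfl
    have e3x : intMax 3 ![ν₁, ν₂, ν₃] K J ![x₁, x₂, x₃] 3 =
        sSup (sumTrans 3 ![ν₁, ν₂, ν₃] K J ![x₁, x₂, x₃] '' Icc x₃ 1) := rfl
    have hFy3ne : sumTrans 3 ![ν₁, ν₂, ν₃] K J ![y₁, y₂, y₃] t₃ ≠ ⊥ := by
      rw [← hFt₃, ← e3y]; exact hyr 3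
    have hle3 : sumTrans 3 ![ν₁, ν₂, ν₃] K J ![x₁, x₂, x₃] t₃ ≤
        sumTrans 3 ![ν₁, ν₂, ν₃] K J ![y₁, y₂, y₃] t₃ := by
      calc sumTrans 3 ![ν₁, ν₂, ν₃] K J ![x₁, x₂, x₃] t₃
          ≤ intMax 3 ![ν₁, ν₂, ν₃] K J ![x₁, x₂, x₃] 3 := by
            rw [e3x]
            exact le_sSup (mem_image_of_mem _ ⟨by linarith [ht₃.1], ht₃.2⟩)
        _ ≤ intMax 3 ![ν₁, ν₂, ν₃] K J ![y₁, y₂, y₃] 3 := hA3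
        _ = sumTrans 3 ![ν₁, ν₂, ν₃] K J ![y₁, y₂, y₃] t₃ := by rw [e3y, hFt₃]
    obtain ⟨hJb3, hKy31, hKy32, hKy33⟩ := sumTrans_ne_bot_parts hν₁ hν₂ hν₃ hFy3ne
    have hKx31 : K (t₃ - x₁) ≠ ⊥ :=
      Kne_bot_pos hK hSM (by linarith [ht₃.1]) (by linarith [ht₃.2])
    have hKx32 : K (t₃ - x₂) ≠ ⊥ :=
      hK.2.1 _ (Or.inr ⟨by linarith [ht₃.1], by linarith [ht₃.2]⟩)
    have hKx33 : K (t₃ - x₃) ≠ ⊥ :=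
      hK.2.1 _ (Or.inr ⟨by linarith [ht₃.1], by linarith [ht₃.2]⟩)
    have hineq3 := extract_ineq hK hJtop hJb3 hKx31 hKx32 hKx33 hKy31 hKy32 hKy33 hle3
    have hstrict3 : (K (t₃ - y₁)).toReal < (K (t₃ - x₁)).toReal := by
      have hKlt : K (t₃ - y₁) < K (t₃ - x₁) :=
        hSM.2 ⟨by linarith [ht₃.1], by linarith [ht₃.2]⟩
          ⟨by linarith [ht₃.1], by linarith [ht₃.2]⟩ (by linarith)
      exact ereal_toReal_lt hKlt hKy31 (hKtop _)
    have hS : (K (t₃ - y₃)).toReal ≤ (K (t₃ - x₃)).toReal := by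
      have hKle : K (t₃ - y₃) ≤ K (t₃ - x₃) := by
        rcases eq_or_lt_of_le ht₃.1 with hq | hq
        · have hz : t₃ - y₃ = 0 := by linarith
          rw [hz]
          exact K0_le_pos hK hSM (by linarith) (by linarith [ht₃.2])
        · exact (hSM.2 ⟨by linarith, by linarith [ht₃.2]⟩
            ⟨by linarith, by linarith [ht₃.2]⟩ (by linarith)).le
      exact ereal_toReal_le hKle hKy33 (hKtop _)
    set R : ℝ := (K (t₃ - y₂)).toReal - (K (t₃ - x₂)).toReal with hRdef
    set S : ℝ := (K (t₃ - x₃)).toReal - (K (t₃ - y₃)).toReal with hSdef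
    have hS0 : 0 ≤ S := by simp only [hSdef]; linarith only [hS]
    have hiii : ν₃ * S < ν₂ * R := by
      have h' := mul_lt_mul_of_pos_left hstrict3 hν₁
      simp only [hRdef, hSdef]
      linarith only [hineq3, h']
    have hslope3 := slopeR (α := t₃ - y₃) (β := t₃ - x₃) (γ := t₃ - x₂) (δ := t₃ - y₂)
      hK hSM (by linarith [ht₃.1]) (by linarith) (by linarith) (by linarith)
      (by linarith [ht₃.2]) hKy33
    have hiv : R * (y₃ - x₃) ≤ S * (x₂ - y₂) := by
      simp only [hRdef, hSdef]
      nlinarith [hslope3]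
    exact coreA hν₂ hν₃ hQ0 hS0 (by linarith only [h3]) (by linarith only [h5]) hi hiii hii hiv
  · -- Claim B : m₀(x) < m₀(y) ∨ m₂(x) < m₂(y)
    by_contra hcon
    push_neg at hcon
    obtain ⟨hB0, hB2⟩ := hcon
    -- maximizer s₀ of F(x,·) on [0, x₁]
    obtain ⟨s₀, hs₀, hFs₀⟩ := exists_maximizer (K := K) (J := J) hK hJusc hJtop hν₁ hν₂ hν₃
      x₁ x₂ x₃ h0
      (fun t ht => ⟨by linarith [ht.1], by linarith [ht.2]⟩)
      (by
        intro z hz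
        simp only [mem_insert_iff, mem_singleton_iff] at hz
        rcases hz with rfl | rfl | rfl
        · exact Or.inl (fun t ht => ⟨by linarith [ht.1], by linarith [ht.2]⟩)
        · exact Or.inl (fun t ht => ⟨by linarith [ht.1], by linarith [ht.2]⟩)
        · exact Or.inl (fun t ht => ⟨by linarith [ht.1], by linarith [ht.2]⟩))
    have e0x : intMax 3 ![ν₁, ν₂, ν₃] K J ![x₁, x₂, x₃] 0 =
        sSup (sumTrans 3 ![ν₁, ν₂, ν₃] K J ![x₁, x₂, x₃] '' Icc 0 x₁) := rfl
    have e0y : intMax 3 ![ν₁, ν₂, ν₃] K J ![y₁, y₂, y₃] 0 =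
        sSup (sumTrans 3 ![ν₁, ν₂, ν₃] K J ![y₁, y₂, y₃] '' Icc 0 y₁) := rfl
    have hFx0ne : sumTrans 3 ![ν₁, ν₂, ν₃] K J ![x₁, x₂, x₃] s₀ ≠ ⊥ := by
      rw [← hFs₀, ← e0x]; exact hxr 0
    have hle0 : sumTrans 3 ![ν₁, ν₂, ν₃] K J ![y₁, y₂, y₃] s₀ ≤
        sumTrans 3 ![ν₁, ν₂, ν₃] K J ![x₁, x₂, x₃] s₀ := by
      calc sumTrans 3 ![ν₁, ν₂, ν₃] K J ![y₁, y₂, y₃] s₀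
          ≤ intMax 3 ![ν₁, ν₂, ν₃] K J ![y₁, y₂, y₃] 0 := by
            rw [e0y]
            exact le_sSup (mem_image_of_mem _ ⟨hs₀.1, by linarith [hs₀.2]⟩)
        _ ≤ intMax 3 ![ν₁, ν₂, ν₃] K J ![x₁, x₂, x₃] 0 := hB0
        _ = sumTrans 3 ![ν₁, ν₂, ν₃] K J ![x₁, x₂, x₃] s₀ := by rw [e0x, hFs₀]
    obtain ⟨hJb0, hKx01, hKx02, hKx03⟩ := sumTrans_ne_bot_parts hν₁ hν₂ hν₃ hFx0ne
    have hKy01 : K (s₀ - y₁) ≠ ⊥ :=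
      hK.2.1 _ (Or.inl ⟨by linarith [hs₀.1], by linarith [hs₀.2]⟩)
    have hKy02 : K (s₀ - y₂) ≠ ⊥ :=
      hK.2.1 _ (Or.inl ⟨by linarith [hs₀.1], by linarith [hs₀.2]⟩)
    have hKy03 : K (s₀ - y₃) ≠ ⊥ :=
      Kne_bot_neg hK hSM (by linarith [hs₀.1]) (by linarith [hs₀.2])
    have hineq0 := extract_ineq hK hJtop hJb0 hKy01 hKy02 hKy03 hKx01 hKx02 hKx03 hle0
    have hstrict0 : (K (s₀ - x₃)).toReal < (K (s₀ - y₃)).toReal := by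
      have hKlt : K (s₀ - x₃) < K (s₀ - y₃) :=
        hSM.1 ⟨by linarith [hs₀.1], by linarith [hs₀.2]⟩
          ⟨by linarith [hs₀.1], by linarith [hs₀.2]⟩ (by linarith)
      exact ereal_toReal_lt hKlt hKx03 (hKtop _)
    have hY : (K (s₀ - x₁)).toReal ≤ (K (s₀ - y₁)).toReal := by
      have hKle : K (s₀ - x₁) ≤ K (s₀ - y₁) := by
        rcases eq_or_lt_of_le hs₀.2 with hq | hq
        · have hz : s₀ - x₁ = 0 := by linarith
          rw [hz]
          exact K0_le_neg hK hSM (by linarith [hs₀.1]) (by linarith)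
        · exact (hSM.1 ⟨by linarith [hs₀.1], by linarith⟩
            ⟨by linarith [hs₀.1], by linarith⟩ (by linarith)).le
      exact ereal_toReal_le hKle hKx01 (hKtop _)
    set X : ℝ := (K (s₀ - x₂)).toReal - (K (s₀ - y₂)).toReal with hXdef
    set Y : ℝ := (K (s₀ - y₁)).toReal - (K (s₀ - x₁)).toReal with hYdef
    have hY0 : 0 ≤ Y := by simp only [hYdef]; linarith only [hY]
    have hi' : ν₁ * Y < ν₂ * X := by
      have h' := mul_lt_mul_of_pos_left hstrict0 hν₃
      simp only [hXdef, hYdef]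
      linarith only [hineq0, h']
    have hslope0 := slopeL (α := s₀ - x₂) (β := s₀ - y₂) (γ := s₀ - y₁) (δ := s₀ - x₁)
      hK hSM (by linarith [hs₀.1]) (by linarith) (by linarith) (by linarith)
      (by linarith [hs₀.2]) hKx01
    have hii' : X * (y₁ - x₁) ≤ Y * (x₂ - y₂) := by
      simp only [hXdef, hYdef]
      nlinarith [hslope0]
    -- maximizer s₂ of F(x,·) on [x₂, x₃]
    obtain ⟨s₂, hs₂, hFs₂⟩ := exists_maximizer (K := K) (J := J) hK hJusc hJtop hν₁ hν₂ hν₃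
      x₁ x₂ x₃ h4.le
      (fun t ht => ⟨by linarith [ht.1], by linarith [ht.2]⟩)
      (by
        intro z hz
        simp only [mem_insert_iff, mem_singleton_iff] at hz
        rcases hz with rfl | rfl | rfl
        · exact Or.inr (fun t ht => ⟨by linarith [ht.1], by linarith [ht.2]⟩)
        · exact Or.inr (fun t ht => ⟨by linarith [ht.1], by linarith [ht.2]⟩)
        · exact Or.inl (fun t ht => ⟨by linarith [ht.1], by linarith [ht.2]⟩))
    have e2x : intMax 3 ![ν₁, ν₂, ν₃] K J ![x₁, x₂, x₃] 2 =
        sSup (sumTrans 3 ![ν₁, ν₂, ν₃] K J ![x₁, x₂, x₃] '' Icc x₂ x₃) := rfl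
    have e2y : intMax 3 ![ν₁, ν₂, ν₃] K J ![y₁, y₂, y₃] 2 =
        sSup (sumTrans 3 ![ν₁, ν₂, ν₃] K J ![y₁, y₂, y₃] '' Icc y₂ y₃) := rfl
    have hFx2ne : sumTrans 3 ![ν₁, ν₂, ν₃] K J ![x₁, x₂, x₃] s₂ ≠ ⊥ := by
      rw [← hFs₂, ← e2x]; exact hxr 2
    have hle2 : sumTrans 3 ![ν₁, ν₂, ν₃] K J ![y₁, y₂, y₃] s₂ ≤
        sumTrans 3 ![ν₁, ν₂, ν₃] K J ![x₁, x₂, x₃] s₂ := by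
      calc sumTrans 3 ![ν₁, ν₂, ν₃] K J ![y₁, y₂, y₃] s₂
          ≤ intMax 3 ![ν₁, ν₂, ν₃] K J ![y₁, y₂, y₃] 2 := by
            rw [e2y]
            exact le_sSup (mem_image_of_mem _ ⟨by linarith [hs₂.1], by linarith [hs₂.2]⟩)
        _ ≤ intMax 3 ![ν₁, ν₂, ν₃] K J ![x₁, x₂, x₃] 2 := hB2
        _ = sumTrans 3 ![ν₁, ν₂, ν₃] K J ![x₁, x₂, x₃] s₂ := by rw [e2x, hFs₂]
    obtain ⟨hJb2, hKx21, hKx22, hKx23⟩ := sumTrans_ne_bot_parts hν₁ hν₂ hν₃ hFx2ne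
    have hKy21 : K (s₂ - y₁) ≠ ⊥ :=
      hK.2.1 _ (Or.inr ⟨by linarith [hs₂.1], by linarith [hs₂.2]⟩)
    have hKy22 : K (s₂ - y₂) ≠ ⊥ :=
      hK.2.1 _ (Or.inr ⟨by linarith [hs₂.1], by linarith [hs₂.2]⟩)
    have hKy23 : K (s₂ - y₃) ≠ ⊥ :=
      hK.2.1 _ (Or.inl ⟨by linarith [hs₂.1], by linarith [hs₂.2]⟩)
    have hineq2 := extract_ineq hK hJtop hJb2 hKy21 hKy22 hKy23 hKx21 hKx22 hKx23 hle2
    have hd3 : (K (s₂ - x₃)).toReal ≤ (K (s₂ - y₃)).toReal := by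
      have hKle : K (s₂ - x₃) ≤ K (s₂ - y₃) := by
        rcases eq_or_lt_of_le hs₂.2 with hq | hq
        · have hz : s₂ - x₃ = 0 := by linarith
          rw [hz]
          exact K0_le_neg hK hSM (by linarith [hs₂.1]) (by linarith)
        · exact (hSM.1 ⟨by linarith [hs₂.1], by linarith⟩
            ⟨by linarith [hs₂.1], by linarith⟩ (by linarith)).le
      exact ereal_toReal_le hKle hKx23 (hKtop _)
    have hW : (K (s₂ - x₂)).toReal < (K (s₂ - y₂)).toReal := by
      have hKlt : K (s₂ - x₂) < K (s₂ - y₂) := by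
        rcases eq_or_lt_of_le hs₂.1 with hq | hq
        · have hz : s₂ - x₂ = 0 := by linarith
          rw [hz]
          exact K0_lt_pos hK hSM (by linarith) (by linarith [hs₂.2])
        · exact hSM.2 ⟨by linarith, by linarith [hs₂.2]⟩
            ⟨by linarith, by linarith [hs₂.2]⟩ (by linarith)
      exact ereal_toReal_lt hKlt hKx22 (hKtop _)
    set Z : ℝ := (K (s₂ - x₁)).toReal - (K (s₂ - y₁)).toReal with hZdef
    set W : ℝ := (K (s₂ - y₂)).toReal - (K (s₂ - x₂)).toReal with hWdef
    have hW0 : 0 < W := by simp only [hWdef]; linarith only [hW]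
    have hiii' : ν₂ * W ≤ ν₁ * Z := by
      have h' := mul_le_mul_of_nonneg_left hd3 hν₃.le
      simp only [hZdef, hWdef]
      linarith only [hineq2, h']
    have hslope2 := slopeR (α := s₂ - x₂) (β := s₂ - y₂) (γ := s₂ - y₁) (δ := s₂ - x₁)
      hK hSM (by linarith [hs₂.1]) (by linarith) (by linarith) (by linarith)
      (by linarith [hs₂.2]) hKx22
    have hiv' : Z * (x₂ - y₂) ≤ W * (y₁ - x₁) := by
      simp only [hZdef, hWdef]
      nlinarith [hslope2]
    exact coreB hν₁ hν₂ hY0 hW0 (by linarith only [h1]) (by linarith only [h3]) hi' hiii' hii' hiv'
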